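/- κ^{<κ} = κ; that is, κ is a regular cardinal and 2^θ ≤ κ for every θ < κ. -/

import Mathlib

universe u
open Ordinal Cardinal Set

namespace Stmt12Aux

noncomputable def rnk {o : Ordinal.{u}} (t : o.ToType) : Ordinal.{u} :=
  @typein _ (· < ·) isWellOrder_lt t

noncomputable def enm {o : Ordinal.{u}} (j : Ordinal.{u}) (h : j < o) : o.ToType :=
  @enum _ (· < ·) isWellOrder_lt ⟨j, by rw [type_toType]; exact h⟩

theorem rnk_lt {o : Ordinal.{u}} (t : o.ToType) : rnk t < o := typein_lt_self t

theorem rnk_enm {o : Ordinal.{u}} (j : Ordinal.{u}) (h : j < o) : rnk (enm j h) = j :=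
  @typein_enum _ (· < ·) isWellOrder_lt _ (by rw [type_toType]; exact h)

theorem enm_rnk {o : Ordinal.{u}} (t : o.ToType) : enm (rnk t) (rnk_lt t) = t :=
  @enum_typein _ (· < ·) isWellOrder_lt t

theorem rnk_lt_rnk {o : Ordinal.{u}} {t t' : o.ToType} : rnk t < rnk t' ↔ t < t' :=
  @typein_lt_typein _ (· < ·) isWellOrder_lt _ _

theorem rnk_inj {o : Ordinal.{u}} {t t' : o.ToType} : rnk t = rnk t' ↔ t = t' :=
  @typein_inj _ (· < ·) isWellOrder_lt _ _

variable {M : Type u} [LinearOrder M] {κ : Cardinal.{u}}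

theorem exists_chain (hκ : Cardinal.aleph0 < κ) (hM : Cardinal.mk M = κ)
    (hsat : ∀ A B : Set M, Cardinal.mk ↥A < κ → Cardinal.mk ↥B < κ →
      (∀ a ∈ A, ∀ b ∈ B, a < b) →
      ∃ m : M, (∀ a ∈ A, a < m) ∧ (∀ b ∈ B, m < b))
    (l r : M) (hlr : l < r) :
    ∃ x : Ordinal.{u} → M,
      ∀ i < κ.ord, (l < x i ∧ x i < r) ∧ ∀ j < i, x j < x i := by
  classical
  haveI : Nonempty M := Cardinal.mk_ne_zero_iff.1 (by rw [hM]; exact (aleph0_pos.trans hκ).ne')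
  let x : Ordinal.{u} → M := WellFounded.fix Ordinal.lt_wf (fun i ih =>
    if h : ∃ m : M, (l < m ∧ m < r) ∧ ∀ j (hj : j < i), ih j hj < m then h.choose
    else Classical.arbitrary M)
  have xeq : ∀ i : Ordinal.{u}, x i =
      if h : ∃ m : M, (l < m ∧ m < r) ∧ ∀ j (_ : j < i), x j < m then h.choose
      else Classical.arbitrary M := fun i => WellFounded.fix_eq _ _ i
  refine ⟨x, fun i hi => ?_⟩
  induction i using Ordinal.induction with
  | h i IH =>
    have hex : ∃ m : M, (l < m ∧ m < r) ∧ ∀ j (_ : j < i), x j < m := by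
      have hicard : i.card < κ := Cardinal.lt_ord.1 hi
      set A : Set M := insert l (Set.range fun t : i.ToType => x (rnk t)) with hA
      have hAcard : Cardinal.mk ↥A < κ :=
        lt_of_le_of_lt Cardinal.mk_insert_le <| by
          refine Cardinal.add_lt_of_lt hκ.le (lt_of_le_of_lt Cardinal.mk_range_le ?_)
            (Cardinal.one_lt_aleph0.trans hκ)
          rwa [Cardinal.mk_toType]
      have hBcard : Cardinal.mk ↥({r} : Set M) < κ := by
        rw [Cardinal.mk_singleton]; exact Cardinal.one_lt_aleph0.trans hκ
      have horder : ∀ a ∈ A, ∀ b ∈ ({r} : Set M), a < b := by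
        rintro a ha b rfl
        rcases Set.mem_insert_iff.1 ha with rfl | ⟨t, rfl⟩
        · exact hlr
        · exact ((IH _ (rnk_lt t) ((rnk_lt t).trans hi)).1).2
      obtain ⟨m, hm1, hm2⟩ := hsat A {r} hAcard hBcard horder
      refine ⟨m, ⟨hm1 l (Set.mem_insert _ _), hm2 r rfl⟩, fun j hj => ?_⟩
      exact hm1 _ (Set.mem_insert_iff.2 (Or.inr ⟨enm j hj, by show x (rnk (enm j hj)) = x j; rw [rnk_enm]⟩))
    rw [xeq i, dif_pos hex]
    exact ⟨hex.choose_spec.1, fun j hj => hex.choose_spec.2 j hj⟩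


theorem exists_disjoint (hκ : Cardinal.aleph0 < κ) (hM : Cardinal.mk M = κ)
    (hsat : ∀ A B : Set M, Cardinal.mk ↥A < κ → Cardinal.mk ↥B < κ →
      (∀ a ∈ A, ∀ b ∈ B, a < b) →
      ∃ m : M, (∀ a ∈ A, a < m) ∧ (∀ b ∈ B, m < b))
    (l r : M) (hlr : l < r) :
    ∃ D : M → M × M,
      (∀ m : M, l < (D m).1 ∧ (D m).1 < (D m).2 ∧ (D m).2 < r) ∧
      ∀ m m' : M, m ≠ m' → (D m).2 ≤ (D m').1 ∨ (D m').2 ≤ (D m).1 := by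
  obtain ⟨x, hx⟩ := exists_chain hκ hM hsat l r hlr
  obtain ⟨e⟩ : Nonempty (M ≃ κ.ord.ToType) :=
    Cardinal.eq.1 (hM.trans (Cardinal.mk_ord_toType κ).symm)
  have h1κ : (1 : Cardinal.{u}) < κ := Cardinal.one_lt_aleph0.trans hκ
  let rk : M → Ordinal.{u} := fun m => rnk (e m)
  have hrk : ∀ m, rk m < κ.ord := fun m => rnk_lt _
  have hrkinj : Function.Injective rk := fun a b h => e.injective (rnk_inj.1 h)
  have hlt1 : ∀ o : Ordinal.{u}, o < o + 1 := fun o => by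
    rw [Ordinal.add_one_eq_succ]; exact Order.lt_succ o
  have hbound : ∀ m : M, rk m + rk m + 1 < κ.ord := by
    intro m
    have h1 : (rk m).card < κ := Cardinal.lt_ord.1 (hrk m)
    rw [Cardinal.lt_ord, Ordinal.card_add, Ordinal.card_add, Ordinal.card_one]
    exact Cardinal.add_lt_of_lt hκ.le (Cardinal.add_lt_of_lt hκ.le h1 h1) h1κ
  have hbound' : ∀ m : M, rk m + rk m < κ.ord :=
    fun m => lt_of_le_of_lt (le_of_lt (hlt1 _)) (hbound m)
  have xmono : ∀ a b : Ordinal.{u}, a ≤ b → b < κ.ord → x a ≤ x b := by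
    intro a b hab hb
    rcases lt_or_eq_of_le hab with h | h
    · exact le_of_lt ((hx b hb).2 a h)
    · rw [h]
  refine ⟨fun m => (x (rk m + rk m), x (rk m + rk m + 1)), fun m => ?_, fun m m' hne => ?_⟩
  · exact ⟨(hx _ (hbound' m)).1.1, (hx _ (hbound m)).2 _ (hlt1 _), (hx _ (hbound m)).1.2⟩
  · have key : ∀ a b : M, rk a < rk b → x (rk a + rk a + 1) ≤ x (rk b + rk b) := by
      intro a b hab
      refine xmono _ _ ?_ (hbound' b)
      rw [add_assoc]
      calc rk a + (rk a + 1) ≤ rk a + rk b :=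
            add_le_add_right (by rw [Ordinal.add_one_eq_succ]; exact Order.succ_le_of_lt hab) _
        _ ≤ rk b + rk b := add_le_add_left (le_of_lt hab) _
    rcases lt_or_gt_of_ne (fun h : rk m = rk m' => hne (hrkinj h)) with h | h
    · exact Or.inl (key m m' h)
    · exact Or.inr (key m' m h)


theorem exists_step_core (hκ : Cardinal.aleph0 < κ) (hM : Cardinal.mk M = κ)
    (hsat : ∀ A B : Set M, Cardinal.mk ↥A < κ → Cardinal.mk ↥B < κ →
      (∀ a ∈ A, ∀ b ∈ B, a < b) →
      ∃ m : M, (∀ a ∈ A, a < m) ∧ (∀ b ∈ B, m < b))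
    (L R : Set M) (hL : Cardinal.mk ↥L < κ) (hR : Cardinal.mk ↥R < κ)
    (hord : ∀ a ∈ L, ∀ b ∈ R, a < b) :
    ∃ D : M → M × M,
      (∀ m : M, (∀ a ∈ L, a < (D m).1) ∧ (D m).1 < (D m).2 ∧ (∀ b ∈ R, (D m).2 < b)) ∧
      ∀ m m' : M, m ≠ m' → (D m).2 ≤ (D m').1 ∨ (D m').2 ≤ (D m).1 := by
  obtain ⟨l₀, hl₀L, hl₀R⟩ := hsat L R hL hR hord
  have hL' : Cardinal.mk ↥(insert l₀ L) < κ :=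
    lt_of_le_of_lt Cardinal.mk_insert_le
      (Cardinal.add_lt_of_lt hκ.le hL (Cardinal.one_lt_aleph0.trans hκ))
  have hord' : ∀ a ∈ insert l₀ L, ∀ b ∈ R, a < b := by
    rintro a ha b hb
    rcases Set.mem_insert_iff.1 ha with rfl | ha
    · exact hl₀R b hb
    · exact hord a ha b hb
  obtain ⟨r₀, hr₀L, hr₀R⟩ := hsat (insert l₀ L) R hL' hR hord'
  have hl₀r₀ : l₀ < r₀ := hr₀L l₀ (Set.mem_insert _ _)
  obtain ⟨D, hD1, hD2⟩ := exists_disjoint hκ hM hsat l₀ r₀ hl₀r₀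
  refine ⟨D, fun m => ⟨fun a ha => (hl₀L a ha).trans (hD1 m).1, (hD1 m).2.1,
    fun b hb => ((hD1 m).2.2).trans (hr₀R b hb)⟩, hD2⟩

theorem exists_step (hκ : Cardinal.aleph0 < κ) (hM : Cardinal.mk M = κ)
    (hsat : ∀ A B : Set M, Cardinal.mk ↥A < κ → Cardinal.mk ↥B < κ →
      (∀ a ∈ A, ∀ b ∈ B, a < b) →
      ∃ m : M, (∀ a ∈ A, a < m) ∧ (∀ b ∈ B, m < b)) :
    ∃ step : Set M → Set M → M → M × M,
      ∀ L R : Set M, Cardinal.mk ↥L < κ → Cardinal.mk ↥R < κ →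
        (∀ a ∈ L, ∀ b ∈ R, a < b) →
        (∀ m : M, (∀ a ∈ L, a < (step L R m).1) ∧ (step L R m).1 < (step L R m).2 ∧
            (∀ b ∈ R, (step L R m).2 < b)) ∧
        (∀ m m' : M, m ≠ m' →
          (step L R m).2 ≤ (step L R m').1 ∨ (step L R m').2 ≤ (step L R m).1) := by
  classical
  haveI : Nonempty M := Cardinal.mk_ne_zero_iff.1 (by rw [hM]; exact (aleph0_pos.trans hκ).ne')
  refine ⟨fun L R =>
    if H : Cardinal.mk ↥L < κ ∧ Cardinal.mk ↥R < κ ∧ (∀ a ∈ L, ∀ b ∈ R, a < b) then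
      (exists_step_core hκ hM hsat L R H.1 H.2.1 H.2.2).choose
    else fun _ => (Classical.arbitrary M, Classical.arbitrary M), ?_⟩
  intro L R hL hR hord
  have H : Cardinal.mk ↥L < κ ∧ Cardinal.mk ↥R < κ ∧ (∀ a ∈ L, ∀ b ∈ R, a < b) :=
    ⟨hL, hR, hord⟩
  simp only [dif_pos H]
  exact (exists_step_core hκ hM hsat L R H.1 H.2.1 H.2.2).choose_spec


theorem pow_le (hκ : Cardinal.aleph0 < κ) (hM : Cardinal.mk M = κ)
    (hsat : ∀ A B : Set M, Cardinal.mk ↥A < κ → Cardinal.mk ↥B < κ →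
      (∀ a ∈ A, ∀ b ∈ B, a < b) →
      ∃ m : M, (∀ a ∈ A, a < m) ∧ (∀ b ∈ B, m < b))
    (θ : Cardinal.{u}) (hθ : θ < κ) : κ ^ θ ≤ κ := by
  classical
  haveI : Nonempty M := Cardinal.mk_ne_zero_iff.1 (by rw [hM]; exact (aleph0_pos.trans hκ).ne')
  obtain ⟨step, hstep⟩ := exists_step hκ hM hsat
  let T : Type u := θ.ord.ToType
  let v : Ordinal.{u} → (T → M) → M := fun o s =>
    if h : o < θ.ord then s (enm o h) else Classical.arbitrary M
  let P : (T → M) → Ordinal.{u} → M × M := fun s => WellFounded.fix Ordinal.lt_wf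
    (fun o ih => step (Set.range fun t : o.ToType => (ih (rnk t) (rnk_lt t)).1)
                      (Set.range fun t : o.ToType => (ih (rnk t) (rnk_lt t)).2)
                      (v o s))
  have Peq : ∀ (s : T → M) (o : Ordinal.{u}), P s o =
      step (Set.range fun t : o.ToType => (P s (rnk t)).1)
           (Set.range fun t : o.ToType => (P s (rnk t)).2) (v o s) :=
    fun s o => WellFounded.fix_eq _ _ o
  have hrange : ∀ (o : Ordinal.{u}) (g : o.ToType → M), o.card < κ →
      Cardinal.mk ↥(Set.range g) < κ := by
    intro o g ho
    exact lt_of_le_of_lt Cardinal.mk_range_le (by rwa [Cardinal.mk_toType])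
  -- the nesting invariant
  have inv : ∀ (s : T → M) (o : Ordinal.{u}), o.card < κ →
      ((P s o).1 < (P s o).2 ∧
        ∀ o' < o, (P s o').1 < (P s o).1 ∧ (P s o).2 < (P s o').2) := by
    intro s o
    induction o using Ordinal.induction with
    | h o IH =>
      intro hcard
      have hcard' : ∀ o' < o, o'.card < κ := fun o' h =>
        lt_of_le_of_lt (Ordinal.card_le_card h.le) hcard
      have hord : ∀ a ∈ (Set.range fun t : o.ToType => (P s (rnk t)).1),
          ∀ b ∈ (Set.range fun t : o.ToType => (P s (rnk t)).2), a < b := by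
        rintro a ⟨t, rfl⟩ b ⟨t', rfl⟩
        rcases lt_trichotomy (rnk t) (rnk t') with h | h | h
        · exact lt_trans
            ((IH _ (rnk_lt t') (hcard' _ (rnk_lt t'))).2 _ h).1
            (IH _ (rnk_lt t') (hcard' _ (rnk_lt t'))).1
        · show (P s (rnk t)).1 < (P s (rnk t')).2
          rw [h]; exact (IH _ (rnk_lt t') (hcard' _ (rnk_lt t'))).1
        · exact lt_trans (IH _ (rnk_lt t) (hcard' _ (rnk_lt t))).1
            ((IH _ (rnk_lt t) (hcard' _ (rnk_lt t))).2 _ h).2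
      have spec := hstep _ _ (hrange o _ hcard) (hrange o _ hcard) hord
      constructor
      · rw [Peq]; exact (spec.1 (v o s)).2.1
      · intro o' ho'
        have hmemL : (P s o').1 ∈ (Set.range fun t : o.ToType => (P s (rnk t)).1) :=
          ⟨enm o' ho', by show (P s (rnk (enm o' ho'))).1 = _; rw [rnk_enm]⟩
        have hmemR : (P s o').2 ∈ (Set.range fun t : o.ToType => (P s (rnk t)).2) :=
          ⟨enm o' ho', by show (P s (rnk (enm o' ho'))).2 = _; rw [rnk_enm]⟩
        rw [Peq s o]
        exact ⟨(spec.1 (v o s)).1 _ hmemL, (spec.1 (v o s)).2.2 _ hmemR⟩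
  -- ordering between lefts and rights
  have horderLR : ∀ (s : T → M) (o : Ordinal.{u}), o.card < κ →
      ∀ a ∈ (Set.range fun t : o.ToType => (P s (rnk t)).1),
      ∀ b ∈ (Set.range fun t : o.ToType => (P s (rnk t)).2), a < b := by
    intro s o hcard
    have hcard' : ∀ o' < o, o'.card < κ := fun o' h =>
      lt_of_le_of_lt (Ordinal.card_le_card h.le) hcard
    rintro a ⟨t, rfl⟩ b ⟨t', rfl⟩
    rcases lt_trichotomy (rnk t) (rnk t') with h | h | h
    · exact lt_trans
        ((inv s _ (hcard' _ (rnk_lt t'))).2 _ h).1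
        (inv s _ (hcard' _ (rnk_lt t'))).1
    · show (P s (rnk t)).1 < (P s (rnk t')).2
      rw [h]; exact (inv s _ (hcard' _ (rnk_lt t'))).1
    · exact lt_trans (inv s _ (hcard' _ (rnk_lt t))).1
        ((inv s _ (hcard' _ (rnk_lt t))).2 _ h).2
  -- agreement
  have agree : ∀ (s s' : T → M) (o : Ordinal.{u}),
      (∀ t : T, rnk t ≤ o → s t = s' t) → P s o = P s' o := by
    intro s s' o
    induction o using Ordinal.induction with
    | h o IH =>
      intro hag
      have h1 : (fun t : o.ToType => (P s (rnk t)).1)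
          = fun t : o.ToType => (P s' (rnk t)).1 := by
        funext t
        rw [IH (rnk t) (rnk_lt t) (fun u hu => hag u (hu.trans (le_of_lt (rnk_lt t))))]
      have h2 : (fun t : o.ToType => (P s (rnk t)).2)
          = fun t : o.ToType => (P s' (rnk t)).2 := by
        funext t
        rw [IH (rnk t) (rnk_lt t) (fun u hu => hag u (hu.trans (le_of_lt (rnk_lt t))))]
      have hv : v o s = v o s' := by
        by_cases h : o < θ.ord
        · show (if h : o < θ.ord then s (enm o h) else _)
            = (if h : o < θ.ord then s' (enm o h) else _)
          rw [dif_pos h, dif_pos h]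
          exact hag _ (le_of_eq (rnk_enm o h))
        · show (if h : o < θ.ord then s (enm o h) else Classical.arbitrary M)
            = (if h : o < θ.ord then s' (enm o h) else Classical.arbitrary M)
          rw [dif_neg h, dif_neg h]
      rw [Peq, Peq, h1, h2, hv]
  have hθord : θ.ord.card = θ := Cardinal.card_ord θ
  have hθcard : θ.ord.card < κ := by rwa [hθord]
  have hrnkcard : ∀ t : T, (rnk t).card < κ := fun t =>
    lt_of_le_of_lt (Ordinal.card_le_card (rnk_lt t).le) hθcard
  -- the cut point of a branch
  have cut : ∀ s : T → M, ∃ c : M,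
      ∀ t : T, (P s (rnk t)).1 < c ∧ c < (P s (rnk t)).2 := by
    intro s
    obtain ⟨c, h1, h2⟩ := hsat
      (Set.range fun t : T => (P s (rnk t)).1)
      (Set.range fun t : T => (P s (rnk t)).2)
      (hrange θ.ord _ hθcard) (hrange θ.ord _ hθcard)
      (horderLR s θ.ord hθcard)
    exact ⟨c, fun t => ⟨h1 _ ⟨t, rfl⟩, h2 _ ⟨t, rfl⟩⟩⟩
  choose c hc using cut
  -- injectivity of the cut map
  have hinj : Function.Injective c := by
    intro s s' hcc
    by_contra hne
    have hSne : {t : T | s t ≠ s' t}.Nonempty := by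
      by_contra h
      rw [Set.not_nonempty_iff_eq_empty] at h
      refine hne (funext fun t => ?_)
      by_contra ht
      exact Set.eq_empty_iff_forall_notMem.1 h t ht
    have wf : WellFounded ((· < ·) : T → T → Prop) := IsWellFounded.wf
    set S : Set T := {t : T | s t ≠ s' t} with hS
    let t₀ : T := wf.min S hSne
    have ht₀ : s t₀ ≠ s' t₀ := wf.min_mem S hSne
    have hmin : ∀ t : T, t < t₀ → s t = s' t := fun t ht =>
      Classical.byContradiction fun h => wf.not_lt_min S h ht
    have ho₀ : rnk t₀ < θ.ord := rnk_lt t₀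
    have hLeq : (fun t : (rnk t₀).ToType => (P s (rnk t)).1)
        = fun t : (rnk t₀).ToType => (P s' (rnk t)).1 := by
      funext u
      rw [agree s s' (rnk u) (fun w hw => hmin w (rnk_lt_rnk.1 (lt_of_le_of_lt hw (rnk_lt u))))]
    have hReq : (fun t : (rnk t₀).ToType => (P s (rnk t)).2)
        = fun t : (rnk t₀).ToType => (P s' (rnk t)).2 := by
      funext u
      rw [agree s s' (rnk u) (fun w hw => hmin w (rnk_lt_rnk.1 (lt_of_le_of_lt hw (rnk_lt u))))]
    have he : enm (rnk t₀) ho₀ = t₀ := enm_rnk t₀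
    have hvs : v (rnk t₀) s = s t₀ := by
      show (if h : rnk t₀ < θ.ord then s (enm (rnk t₀) h) else _) = s t₀
      rw [dif_pos ho₀, he]
    have hvs' : v (rnk t₀) s' = s' t₀ := by
      show (if h : rnk t₀ < θ.ord then s' (enm (rnk t₀) h) else _) = s' t₀
      rw [dif_pos ho₀, he]
    have hvne : v (rnk t₀) s ≠ v (rnk t₀) s' := by rw [hvs, hvs']; exact ht₀
    have hcard₀ : (rnk t₀).card < κ := hrnkcard t₀
    have hP' : P s' (rnk t₀) =
        step (Set.range fun t : (rnk t₀).ToType => (P s (rnk t)).1)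
             (Set.range fun t : (rnk t₀).ToType => (P s (rnk t)).2) (v (rnk t₀) s') := by
      rw [Peq s' (rnk t₀), hLeq, hReq]
    have hdisj := (hstep _ _ (hrange (rnk t₀) _ hcard₀) (hrange (rnk t₀) _ hcard₀)
      (horderLR s (rnk t₀) hcard₀)).2 (v (rnk t₀) s) (v (rnk t₀) s') hvne
    have hc1 := (hc s t₀).2
    have hc2 := (hc s' t₀).1
    have hc3 := (hc s t₀).1
    have hc4 := (hc s' t₀).2
    rw [Peq s (rnk t₀)] at hc1 hc3
    rw [hP'] at hc2 hc4
    rcases hdisj with h | h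
    · exact absurd hcc (ne_of_lt (lt_trans (lt_of_lt_of_le hc1 h) hc2))
    · exact absurd hcc.symm (ne_of_lt (lt_trans (lt_of_lt_of_le hc4 h) hc3))
  have hTcard : Cardinal.mk T = θ := by rw [Cardinal.mk_toType, hθord]
  have hpow : κ ^ θ = Cardinal.mk (T → M) := by
    rw [← hM, ← hTcard, Cardinal.power_def]
  rw [hpow, ← hM]
  exact Cardinal.mk_le_of_injective hinj

end Stmt12Aux

/-- Instance for dense linear orders of Shelah 950, Claim a10: if `κ > ℵ₀` and `(M, <)`
is a `κ`-saturated linear order of cardinality exactly `κ`, then `κ^{<κ} = κ`; that is,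
`κ` is a regular cardinal and `2^θ ≤ κ` for every `θ < κ`. -/
theorem stmt_12 {M : Type u} [LinearOrder M] (κ : Cardinal.{u})
    (hκ : Cardinal.aleph0 < κ)
    (hM : Cardinal.mk M = κ)
    (hsat : ∀ A B : Set M, Cardinal.mk ↥A < κ → Cardinal.mk ↥B < κ →
      (∀ a ∈ A, ∀ b ∈ B, a < b) →
      ∃ m : M, (∀ a ∈ A, a < m) ∧ (∀ b ∈ B, m < b)) :
    κ.IsRegular ∧ ∀ θ : Cardinal.{u}, θ < κ → (2 : Cardinal.{u}) ^ θ ≤ κ := by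
  have key : ∀ θ : Cardinal.{u}, θ < κ → κ ^ θ ≤ κ :=
    fun θ hθ => Stmt12Aux.pow_le hκ hM hsat θ hθ
  have h2κ : (2 : Cardinal.{u}) ≤ κ := le_of_lt (lt_of_lt_of_le (Cardinal.nat_lt_aleph0 2) hκ.le)
  constructor
  · refine ⟨hκ.le, le_of_not_gt fun h => ?_⟩
    exact absurd (key _ h) (not_le.2 (Cardinal.lt_power_cof hκ.le))
  · intro θ hθ
    exact le_trans (Cardinal.power_le_power_right h2κ) (key θ hθ)
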